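/- There exists a constant C3 > 0 such that, as n → ∞ along multiples of 4, ∑_{j ∈ ℤ, |j| ≤ t0} Pr(G = n/4 − j) · exp( 16·j² / (C3·n·log n) ) tends to 1; moreover this sum equals 1 − O(1/√(log n)). -/

import Mathlib

open scoped Classical
open Finset Filter

/-- `pG n k` is `Pr(G = k)` for the hypergeometric random variable `G(n, n/2, n/2)`,
extended by `0` outside `{0, …, n/2}` (here `k : ℤ`). -/
noncomputable def pG (n : ℕ) (k : ℤ) : ℝ :=
  if 0 ≤ k then (((n / 2).choose k.toNat : ℝ)) ^ 2 / (n.choose (n / 2) : ℝ) else 0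

/-- `t0 = √n · (log n)^{1/4}`. -/
noncomputable def t0 (n : ℕ) : ℝ := Real.sqrt n * Real.log n ^ ((1 : ℝ) / 4)

/-- The central sum `∑_{|j| ≤ t0} Pr(G = n/4 − j) · exp(16j²/(C3 n log n))`. -/
noncomputable def centralSum (C3 : ℝ) (n : ℕ) : ℝ :=
  ∑ j ∈ (Finset.Icc (-(n : ℤ)) (n : ℤ)).filter (fun j : ℤ => |(j : ℝ)| ≤ t0 n),
    pG n (((n / 4 : ℕ) : ℤ) - j) * Real.exp (16 * (j : ℝ) ^ 2 / (C3 * n * Real.log n))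


lemma pG_nonneg (n : ℕ) (i : ℤ) : 0 ≤ pG n i := by
  unfold pG; split <;> positivity

lemma sum_shift (a b c : ℤ) (f : ℤ → ℝ) :
    ∑ j ∈ Finset.Icc a b, f (c - j) = ∑ i ∈ Finset.Icc (c-b) (c-a), f i := by
  refine Finset.sum_nbij' (fun j => c - j) (fun i => c - i) (fun x hx => ?_) (fun x hx => ?_)
    (fun x _ => by omega) (fun x _ => by omega) (fun x _ => rfl) <;>
  · simp only [Finset.mem_Icc] at *; omega

lemma sum_Icc_nat (N : ℕ) (f : ℤ → ℝ) :
    ∑ i ∈ Finset.Icc (0:ℤ) (N:ℤ), f i = ∑ i ∈ Finset.range (N+1), f (i : ℤ) := by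
  refine Finset.sum_nbij' (fun i => i.toNat) (fun i => (i : ℤ)) (fun x hx => ?_) (fun x hx => ?_)
    (fun x hx => by simp only [Finset.mem_Icc] at hx; omega) (fun x _ => by omega)
    (fun x hx => by
      simp only [Finset.mem_Icc] at hx
      rw [Int.toNat_of_nonneg hx.1]) <;>
  · simp only [Finset.mem_Icc, Finset.mem_range] at *; omega

lemma sumA (m : ℕ) : ∑ i ∈ range (m+1), m.choose i ^ 2 = (2*m).choose m := by
  rw [two_mul, Nat.add_choose_eq, Finset.Nat.sum_antidiagonal_eq_sum_range_succ_mk]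
  refine Finset.sum_congr rfl fun i hi => ?_
  rw [Nat.choose_symm (Nat.lt_succ_iff.mp (mem_range.mp hi)), sq]

lemma sumB (m : ℕ) : 2 * ∑ i ∈ range (m+1), i * m.choose i ^ 2 = m * (2*m).choose m := by
  have h2 : ∑ i ∈ range (m+1), (m - i) * m.choose i ^ 2
      = ∑ i ∈ range (m+1), i * m.choose i ^ 2 := by
    rw [← Finset.sum_range_reflect (fun i => i * m.choose i ^ 2) (m+1)]
    refine Finset.sum_congr rfl fun i hi => ?_
    have hi' : i ≤ m := Nat.lt_succ_iff.mp (mem_range.mp hi)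
    simp only [Nat.add_sub_cancel]
    rw [Nat.choose_symm hi']
  have h3 : ∑ i ∈ range (m+1), (m - i) * m.choose i ^ 2
        + ∑ i ∈ range (m+1), i * m.choose i ^ 2
      = ∑ i ∈ range (m+1), m * m.choose i ^ 2 := by
    rw [← Finset.sum_add_distrib]
    refine Finset.sum_congr rfl fun i hi => ?_
    have hi' : i ≤ m := Nat.lt_succ_iff.mp (mem_range.mp hi)
    rw [← Nat.add_mul, Nat.sub_add_cancel hi']
  rw [two_mul]
  nth_rewrite 1 [← h2]
  rw [h3, ← Finset.mul_sum, sumA]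

lemma sumC (m : ℕ) : ∑ i ∈ range (m+2), (i * (m+1).choose i) ^ 2
    = (m+1)^2 * (2*m).choose m := by
  rw [Finset.sum_range_succ']
  simp only [Nat.zero_mul, Nat.zero_pow, Nat.add_zero]
  have key : ∀ i, (i+1) * (m+1).choose (i+1) = (m+1) * m.choose i := by
    intro i
    rw [Nat.mul_comm (i+1), ← Nat.add_one_mul_choose_eq]
  calc ∑ i ∈ range (m+1), ((i+1) * (m+1).choose (i+1)) ^ 2 + 0
      = ∑ i ∈ range (m+1), ((m+1) * m.choose i) ^ 2 := by
        rw [Nat.add_zero]; exact Finset.sum_congr rfl fun i _ => by rw [key i]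
    _ = (m+1)^2 * (2*m).choose m := by
        rw [← sumA m, Finset.mul_sum]
        exact Finset.sum_congr rfl fun i _ => by ring

lemma sumD (m : ℕ) : (m+1) * (2*(m+1)).choose (m+1) = 2*(2*m+1) * ((2*m).choose m) := by
  have h1 : (2*m+2) * (2*m+1).choose m = (2*m+2).choose (m+1) * (m+1) := by
    simpa [Nat.succ_eq_add_one] using Nat.add_one_mul_choose_eq (2*m+1) m
  have h2 : (2*m+1) * (2*m).choose m = (2*m+1).choose (m+1) * (m+1) := by
    simpa [Nat.succ_eq_add_one] using Nat.add_one_mul_choose_eq (2*m) m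
  have hsym : (2*m+1).choose (m+1) = (2*m+1).choose m := by
    rw [← Nat.choose_symm (by omega : m+1 ≤ 2*m+1)]
    congr 1; omega
  rw [hsym] at h2
  have e1 : 2*(m+1) = 2*m+2 := by ring
  rw [e1]
  zify at h1 h2 ⊢
  linear_combination -h1 - 2*h2



lemma varBound (K : ℕ) :
    ∑ i ∈ range (2*(K+1)+1), ((i:ℝ) - ((K:ℝ)+1))^2 * (((2*(K+1)).choose i : ℝ))^2
      ≤ ((K:ℝ)+1) * (((4*(K+1)).choose (2*(K+1))) : ℝ) := by
  simp only [show 2*(K+1)+1 = 2*K+3 from by omega, show 2*(K+1) = 2*K+2 from by omega,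
    show 4*(K+1) = 4*K+4 from by omega]
  have hAr : ∑ i ∈ range (2*K+3), (((2*K+2).choose i : ℝ))^2
      = (((4*K+4).choose (2*K+2)) : ℝ) := by
    have h := sumA (2*K+2)
    rw [show 2*(2*K+2) = 4*K+4 from by omega, show 2*K+2+1 = 2*K+3 from by omega] at h
    exact_mod_cast congrArg (Nat.cast (R := ℝ)) h
  have hBr : 2 * ∑ i ∈ range (2*K+3), (i:ℝ) * (((2*K+2).choose i : ℝ))^2
      = (2*(K:ℝ)+2) * (((4*K+4).choose (2*K+2)) : ℝ) := by
    have h := sumB (2*K+2)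
    rw [show 2*(2*K+2) = 4*K+4 from by omega, show 2*K+2+1 = 2*K+3 from by omega] at h
    have h2 := congrArg (Nat.cast (R := ℝ)) h
    push_cast at h2
    linarith [h2]
  have hCr : ∑ i ∈ range (2*K+3), ((i:ℝ) * (((2*K+2).choose i : ℝ)))^2
      = (2*(K:ℝ)+2)^2 * (((4*K+2).choose (2*K+1)) : ℝ) := by
    have h := sumC (2*K+1)
    rw [show 2*(2*K+1) = 4*K+2 from by omega, show 2*K+1+1 = 2*K+2 from by omega,
        show 2*K+1+2 = 2*K+3 from by omega] at h
    have h2 := congrArg (Nat.cast (R := ℝ)) h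
    push_cast at h2
    linarith [h2]
  have hDr : (2*(K:ℝ)+2) * (((4*K+4).choose (2*K+2)) : ℝ)
      = 2*(4*(K:ℝ)+3) * (((4*K+2).choose (2*K+1)) : ℝ) := by
    have h := sumD (2*K+1)
    rw [show 2*(2*K+1+1) = 4*K+4 from by omega, show 2*K+1+1 = 2*K+2 from by omega,
        show 2*(2*K+1)+1 = 4*K+3 from by omega, show 2*(2*K+1) = 4*K+2 from by omega] at h
    have h2 := congrArg (Nat.cast (R := ℝ)) h
    push_cast at h2
    linarith [h2]
  have hsplit : ∑ i ∈ range (2*K+3), ((i:ℝ) - ((K:ℝ)+1))^2 * (((2*K+2).choose i : ℝ))^2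
      = (∑ i ∈ range (2*K+3), ((i:ℝ) * (((2*K+2).choose i : ℝ)))^2)
        - (2*((K:ℝ)+1)) * (∑ i ∈ range (2*K+3), (i:ℝ) * (((2*K+2).choose i : ℝ))^2)
        + ((K:ℝ)+1)^2 * (∑ i ∈ range (2*K+3), (((2*K+2).choose i : ℝ))^2) := by
    rw [Finset.mul_sum, Finset.mul_sum, ← Finset.sum_sub_distrib, ← Finset.sum_add_distrib]
    exact Finset.sum_congr rfl fun i _ => by ring
  have hVal : ∑ i ∈ range (2*K+3), ((i:ℝ) - ((K:ℝ)+1))^2 * (((2*K+2).choose i : ℝ))^2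
      = ((K:ℝ)+1) * (((4*K+2).choose (2*K+1)) : ℝ) := by
    rw [hsplit, hCr, hAr]
    have hB' : ∑ i ∈ range (2*K+3), (i:ℝ) * (((2*K+2).choose i : ℝ))^2
        = ((K:ℝ)+1) * (((4*K+4).choose (2*K+2)) : ℝ) := by linarith [hBr]
    rw [hB']
    nlinarith [hDr]
  rw [hVal]
  have hDa : (((4*K+2).choose (2*K+1)) : ℝ) ≤ (((4*K+4).choose (2*K+2)) : ℝ) := by
    have h1 : (4*K+2).choose (2*K+1) ≤ (4*K+4).choose (2*K+1) :=
      Nat.choose_le_choose _ (by omega)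
    have h2 : (4*K+4).choose (2*K+1) ≤ (4*K+4).choose ((4*K+4)/2) :=
      Nat.choose_le_middle _ _
    rw [show (4*K+4)/2 = 2*K+2 from by omega] at h2
    exact_mod_cast le_trans h1 h2
  have hp : (0:ℝ) ≤ (K:ℝ)+1 := by positivity
  nlinarith

lemma pG_total (k : ℕ) :
    ∑ i ∈ Finset.Icc (0:ℤ) ((2*k : ℕ) : ℤ), pG (4*k) i = 1 := by
  rw [sum_Icc_nat]
  have hdiv : (4*k)/2 = 2*k := by omega
  have hC : 0 < (((4*k).choose (2*k)) : ℝ) := by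
    exact_mod_cast Nat.choose_pos (by omega)
  have hterm : ∀ i ∈ range (2*k+1),
      pG (4*k) (i:ℤ) = ((2*k).choose i : ℝ)^2 / (((4*k).choose (2*k)):ℝ) := by
    intro i hi
    unfold pG
    rw [if_pos (by positivity : (0:ℤ) ≤ (i:ℤ)), hdiv]
    simp
  rw [Finset.sum_congr rfl hterm, ← Finset.sum_div]
  have hs := sumA (2*k)
  rw [show 2*(2*k) = 4*k from by omega] at hs
  have hcast : (∑ i ∈ range (2*k+1), ((2*k).choose i:ℝ)^2) = (((4*k).choose (2*k)):ℝ) := by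
    exact_mod_cast congrArg (Nat.cast (R:=ℝ)) hs
  rw [hcast]
  field_simp

lemma pG_tail (K : ℕ) (t : ℝ) (ht : 0 < t) :
    ∑ i ∈ (Finset.Icc (0:ℤ) ((2*(K+1) : ℕ) : ℤ)).filter
        (fun i : ℤ => ¬ |(i:ℝ) - ((K:ℝ)+1)| ≤ t), pG (4*(K+1)) i
      ≤ ((K:ℝ)+1) / t^2 := by
  have hdiv : (4*(K+1))/2 = 2*(K+1) := by omega
  have hC : 0 < (((4*(K+1)).choose (2*(K+1))) : ℝ) := by
    exact_mod_cast Nat.choose_pos (by omega)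
  have step1 : ∑ i ∈ (Finset.Icc (0:ℤ) ((2*(K+1) : ℕ) : ℤ)).filter
        (fun i : ℤ => ¬ |(i:ℝ) - ((K:ℝ)+1)| ≤ t), pG (4*(K+1)) i
      ≤ ∑ i ∈ (Finset.Icc (0:ℤ) ((2*(K+1) : ℕ) : ℤ)).filter
        (fun i : ℤ => ¬ |(i:ℝ) - ((K:ℝ)+1)| ≤ t),
          ((i:ℝ) - ((K:ℝ)+1))^2/t^2 * pG (4*(K+1)) i := by
    refine Finset.sum_le_sum fun i hi => ?_
    have hi' := (Finset.mem_filter.mp hi).2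
    push_neg at hi'
    have h1 : t^2 ≤ ((i:ℝ) - ((K:ℝ)+1))^2 := by
      have := le_of_lt hi'
      nlinarith [abs_nonneg ((i:ℝ) - ((K:ℝ)+1)), sq_abs ((i:ℝ) - ((K:ℝ)+1)),
        abs_nonneg ((i:ℝ) - ((K:ℝ)+1))]
    have h2 : (1:ℝ) ≤ ((i:ℝ) - ((K:ℝ)+1))^2/t^2 := by
      rw [le_div_iff₀ (by positivity)]
      linarith
    nlinarith [pG_nonneg (4*(K+1)) i]
  have step2 : ∑ i ∈ (Finset.Icc (0:ℤ) ((2*(K+1) : ℕ) : ℤ)).filter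
        (fun i : ℤ => ¬ |(i:ℝ) - ((K:ℝ)+1)| ≤ t),
          ((i:ℝ) - ((K:ℝ)+1))^2/t^2 * pG (4*(K+1)) i
      ≤ ∑ i ∈ Finset.Icc (0:ℤ) ((2*(K+1) : ℕ) : ℤ),
          ((i:ℝ) - ((K:ℝ)+1))^2/t^2 * pG (4*(K+1)) i := by
    refine Finset.sum_le_sum_of_subset_of_nonneg (Finset.filter_subset _ _) fun i _ _ => ?_
    have := pG_nonneg (4*(K+1)) i
    positivity
  have step3 : ∑ i ∈ Finset.Icc (0:ℤ) ((2*(K+1) : ℕ) : ℤ),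
          ((i:ℝ) - ((K:ℝ)+1))^2/t^2 * pG (4*(K+1)) i
      = (∑ i ∈ range (2*(K+1)+1), ((i:ℝ) - ((K:ℝ)+1))^2 * (((2*(K+1)).choose i : ℝ))^2)
          / (t^2 * (((4*(K+1)).choose (2*(K+1))) : ℝ)) := by
    rw [sum_Icc_nat, eq_comm, Finset.sum_div]
    refine Finset.sum_congr rfl fun i hi => ?_
    rw [eq_comm]
    unfold pG
    rw [if_pos (by positivity : (0:ℤ) ≤ (i:ℤ)), hdiv]
    have h1 : ((i:ℤ)).toNat = i := by omega
    rw [h1]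
    push_cast
    field_simp
  have step4 : (∑ i ∈ range (2*(K+1)+1), ((i:ℝ) - ((K:ℝ)+1))^2 * (((2*(K+1)).choose i : ℝ))^2)
          / (t^2 * (((4*(K+1)).choose (2*(K+1))) : ℝ))
      ≤ (((K:ℝ)+1) * (((4*(K+1)).choose (2*(K+1))) : ℝ))
          / (t^2 * (((4*(K+1)).choose (2*(K+1))) : ℝ)) := by
    gcongr
    exact varBound K
  have step5 : (((K:ℝ)+1) * (((4*(K+1)).choose (2*(K+1))) : ℝ))
          / (t^2 * (((4*(K+1)).choose (2*(K+1))) : ℝ)) = ((K:ℝ)+1)/t^2 := by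
    rw [mul_comm (t^2), ← div_div, mul_div_assoc, div_self (ne_of_gt hC)]
    ring
  linarith [step1, step2, step3.le, step4, step5.le, step3.ge, step5.ge]

lemma exp_le_one_add_two_mul {x : ℝ} (hx : 0 ≤ x) (hx2 : x ≤ 1/2) :
    Real.exp x ≤ 1 + 2*x := by
  have h1 := Real.add_one_le_exp (-x)
  have h3 : 0 < Real.exp x := Real.exp_pos x
  have hmul : (1 - x) * Real.exp x ≤ 1 := by
    rw [Real.exp_neg] at h1
    have h2 := mul_le_mul_of_nonneg_right h1 (le_of_lt h3)
    rw [inv_mul_cancel₀ (ne_of_gt h3)] at h2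
    linarith [h2]
  nlinarith [hmul, h3, mul_le_mul_of_nonneg_left hx2 hx]

/-- The key eventual bound -/
lemma central_key (K : ℕ) (hlog : (1024:ℝ) ≤ Real.log ((4*(K+1) : ℕ) : ℝ)) :
    |centralSum 1 (4*(K+1)) - 1| ≤ 32 / Real.sqrt (Real.log ((4*(K+1) : ℕ) : ℝ)) := by
  set n : ℕ := 4*(K+1) with hn
  set k : ℕ := K+1 with hk
  set L : ℝ := Real.log (n : ℝ) with hLdef
  set s : ℝ := Real.sqrt L with hsdef
  have hLpos : 0 < L := by linarith
  have hs32 : 32 ≤ s := by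
    rw [hsdef, show (32:ℝ) = Real.sqrt (32^2) from by
      rw [Real.sqrt_sq (by norm_num)]]
    exact Real.sqrt_le_sqrt (by norm_num; linarith)
  have hspos : 0 < s := by linarith
  have hs2 : s^2 = L := Real.sq_sqrt hLpos.le
  have hnpos : (0:ℝ) < (n:ℝ) := by positivity
  have hn1 : (1:ℝ) ≤ (n:ℝ) := by exact_mod_cast Nat.one_le_iff_ne_zero.mpr (by omega)
  -- t0 facts
  have hT2 : t0 n ^ 2 = (n:ℝ) * s := by
    rw [t0, mul_pow, Real.sq_sqrt hnpos.le]
    congr 1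
    rw [← Real.rpow_natCast (Real.log (n:ℝ) ^ ((1:ℝ)/4)) 2, ← Real.rpow_mul hLpos.le]
    rw [hsdef, hLdef, Real.sqrt_eq_rpow]
    norm_num
  have hTpos : 0 < t0 n := by
    rw [t0]
    have := Real.rpow_pos_of_pos hLpos ((1:ℝ)/4)
    positivity
  have hTn : t0 n ≤ (n:ℝ) := by
    have hLn2 : L ≤ ((n:ℝ))^2 := by
      have := Real.log_le_sub_one_of_pos hnpos
      nlinarith
    have h4 : Real.log (n:ℝ) ^ ((1:ℝ)/4) ≤ (((n:ℝ))^2) ^ ((1:ℝ)/4) := by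
      exact Real.rpow_le_rpow hLpos.le hLn2 (by norm_num)
    have h5 : (((n:ℝ))^2) ^ ((1:ℝ)/4) = Real.sqrt (n:ℝ) := by
      rw [← Real.rpow_natCast ((n:ℝ)) 2, ← Real.rpow_mul hnpos.le, Real.sqrt_eq_rpow]
      norm_num
    rw [t0]
    calc Real.sqrt n * Real.log n ^ ((1:ℝ)/4) ≤ Real.sqrt n * Real.sqrt n := by
          refine mul_le_mul_of_nonneg_left ?_ (Real.sqrt_nonneg _)
          rw [h5] at h4; exact h4
      _ = (n:ℝ) := Real.mul_self_sqrt hnpos.le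
  -- the index set
  set F : Finset ℤ := (Finset.Icc (-(n:ℤ)) (n:ℤ)).filter (fun j : ℤ => |(j : ℝ)| ≤ t0 n)
    with hF
  have hcs : centralSum 1 n = ∑ j ∈ F, pG n ((k:ℤ) - j)
      * Real.exp (16 * (j : ℝ) ^ 2 / (1 * n * L)) := by
    rw [centralSum, show (n/4 : ℕ) = k from by omega]
  -- W := window probability mass
  set W : ℝ := ∑ j ∈ F, pG n ((k:ℤ) - j) with hW
  have hWnonneg : 0 ≤ W := Finset.sum_nonneg fun j _ => pG_nonneg _ _
  have htotal : ∑ i ∈ Finset.Icc (0:ℤ) ((2*k : ℕ) : ℤ), pG n i = 1 := pG_total k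
  -- W ≤ 1
  have hW1 : W ≤ 1 := by
    have h1 : W ≤ ∑ j ∈ Finset.Icc (-(n:ℤ)) (n:ℤ), pG n ((k:ℤ) - j) :=
      Finset.sum_le_sum_of_subset_of_nonneg (Finset.filter_subset _ _)
        (fun j _ _ => pG_nonneg _ _)
    have h2 : ∑ j ∈ Finset.Icc (-(n:ℤ)) (n:ℤ), pG n ((k:ℤ) - j)
        = ∑ i ∈ Finset.Icc ((k:ℤ) - n) ((k:ℤ) - -(n:ℤ)), pG n i :=
      sum_shift (-(n:ℤ)) (n:ℤ) (k:ℤ) (pG n)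
    have h3 : ∑ i ∈ Finset.Icc ((k:ℤ) - n) ((k:ℤ) - -(n:ℤ)), pG n i
        = ∑ i ∈ Finset.Icc (0:ℤ) ((2*k : ℕ) : ℤ), pG n i := by
      rw [eq_comm]
      refine Finset.sum_subset ?_ ?_
      · intro i hi
        simp only [Finset.mem_Icc] at *
        omega
      · intro i hi hni
        simp only [Finset.mem_Icc] at hi hni
        rw [pG]
        rcases le_or_gt 0 i with h0 | h0
        · rw [if_pos h0, show (n/2 : ℕ) = 2*k from by omega]
          rw [Nat.choose_eq_zero_of_lt (by omega)]
          norm_num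
        · rw [if_neg (not_le.mpr h0)]
    rw [h2, h3, htotal] at h1
    exact h1
  -- lower bound on W
  have hWlow : 1 - 1/(4*s) ≤ W := by
    set S : Finset ℤ := (Finset.Icc (0:ℤ) ((2*k : ℕ) : ℤ)).filter
      (fun i : ℤ => |(i:ℝ) - ((K:ℝ)+1)| ≤ t0 n) with hS
    have himg : ∑ i ∈ S, pG n i = ∑ j ∈ S.image (fun i => (k:ℤ) - i), pG n ((k:ℤ) - j) := by
      rw [Finset.sum_image (fun x _ y _ h => by omega)]
      refine Finset.sum_congr rfl fun i _ => ?_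
      rw [show (k:ℤ) - ((k:ℤ) - i) = i from by ring]
    have hsub : S.image (fun i => (k:ℤ) - i) ⊆ F := by
      intro j hj
      simp only [Finset.mem_image] at hj
      obtain ⟨i, hi, rfl⟩ := hj
      simp only [hS, Finset.mem_filter, Finset.mem_Icc] at hi
      have hkK : ((k:ℕ):ℝ) = (K:ℝ)+1 := by rw [hk]; push_cast; ring
      have habs : |(((k:ℤ) - i : ℤ) : ℝ)| ≤ t0 n := by
        push_cast
        rw [abs_sub_comm]
        rw [hkK]; exact hi.2
      simp only [hF, Finset.mem_filter, Finset.mem_Icc]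
      refine ⟨?_, habs⟩
      have hcast : |(((k:ℤ) - i : ℤ) : ℝ)| ≤ (n:ℝ) := le_trans habs hTn
      rw [abs_le] at hcast
      have e1 : (-(n:ℤ) : ℝ) ≤ (((k:ℤ) - i : ℤ) : ℝ) := by
        push_cast at hcast ⊢; linarith [hcast.1]
      have e2 : ((((k:ℤ) - i : ℤ)) : ℝ) ≤ ((n:ℤ) : ℝ) := by
        push_cast at hcast ⊢; linarith [hcast.2]
      exact ⟨by exact_mod_cast e1, by exact_mod_cast e2⟩
    have h4 : ∑ i ∈ S, pG n i ≤ W :=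
      himg ▸ Finset.sum_le_sum_of_subset_of_nonneg hsub (fun j _ _ => pG_nonneg _ _)
    -- tail bound
    have h5 := pG_tail K (t0 n) hTpos
    have hsplit := Finset.sum_filter_add_sum_filter_not (Finset.Icc (0:ℤ) ((2*k : ℕ) : ℤ))
      (fun i : ℤ => |(i:ℝ) - ((K:ℝ)+1)| ≤ t0 n) (pG n)
    rw [htotal] at hsplit
    have h6 : ((K:ℝ)+1) / (t0 n)^2 = 1/(4*s) := by
      rw [hT2]
      rw [show ((n:ℕ):ℝ) = 4*((K:ℝ)+1) from by push_cast [hn, hk]; ring]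
      field_simp
    rw [h6] at h5
    -- hsplit : S-sum + tail = 1
    have : ∑ i ∈ S, pG n i ≥ 1 - 1/(4*s) := by
      rw [hS]
      linarith [h5, hsplit]
    linarith
  -- exp bound on each term
  have hexpb : ∀ j ∈ F, Real.exp (16 * (j : ℝ) ^ 2 / (1 * n * L)) ≤ 1 + 32/s := by
    intro j hj
    simp only [hF, Finset.mem_filter] at hj
    have hj2 : (j:ℝ)^2 ≤ (n:ℝ) * s := by
      rw [← hT2, ← sq_abs]
      exact pow_le_pow_left₀ (abs_nonneg _) hj.2 2
    have harg : 16 * (j : ℝ) ^ 2 / (1 * n * L) ≤ 16/s := by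
      rw [one_mul, div_le_div_iff₀ (by positivity) hspos]
      calc 16 * (j:ℝ)^2 * s ≤ 16 * ((n:ℝ)*s) * s := by nlinarith [hspos]
        _ = 16 * (n:ℝ) * L := by rw [← hs2]; ring
        _ = 16 * ((n:ℝ) * L) := by ring
    calc Real.exp (16 * (j : ℝ) ^ 2 / (1 * n * L)) ≤ Real.exp (16/s) :=
        Real.exp_le_exp.mpr harg
      _ ≤ 1 + 2*(16/s) := exp_le_one_add_two_mul (by positivity)
          (by rw [div_le_div_iff₀ hspos (by norm_num)]; linarith)
      _ = 1 + 32/s := by ring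
  -- upper bound
  have hub : centralSum 1 n ≤ 1 + 32/s := by
    rw [hcs]
    calc ∑ j ∈ F, pG n ((k:ℤ) - j) * Real.exp (16 * (j : ℝ) ^ 2 / (1 * n * L))
        ≤ ∑ j ∈ F, pG n ((k:ℤ) - j) * (1 + 32/s) := by
          refine Finset.sum_le_sum fun j hj => ?_
          exact mul_le_mul_of_nonneg_left (hexpb j hj) (pG_nonneg _ _)
      _ = W * (1 + 32/s) := by rw [hW, Finset.sum_mul]
      _ ≤ 1 * (1 + 32/s) := by
          refine mul_le_mul_of_nonneg_right hW1 (by positivity)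
      _ = 1 + 32/s := by ring
  -- lower bound
  have hlb : 1 - 32/s ≤ centralSum 1 n := by
    rw [hcs]
    have : W ≤ ∑ j ∈ F, pG n ((k:ℤ) - j) * Real.exp (16 * (j : ℝ) ^ 2 / (1 * n * L)) := by
      rw [hW]
      refine Finset.sum_le_sum fun j hj => ?_
      nth_rewrite 1 [← mul_one (pG n ((k:ℤ) - j))]
      refine mul_le_mul_of_nonneg_left ?_ (pG_nonneg _ _)
      rw [Real.one_le_exp_iff]   -- maybe wrong name
      positivity
    have h14 : 1/(4*s) ≤ 32/s := by
      rw [div_le_div_iff₀ (by positivity) hspos]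
      nlinarith
    linarith
  rw [abs_le]
  constructor <;> [linarith; linarith]

theorem central_sum_tendsto_one :
    ∃ C3 : ℝ, 0 < C3 ∧
      (Tendsto (fun k : ℕ => centralSum C3 (4 * k)) atTop (nhds 1) ∧
        ∃ c : ℝ, 0 < c ∧ ∀ᶠ k : ℕ in atTop,
          |centralSum C3 (4 * k) - 1| ≤ c / Real.sqrt (Real.log ((4 * k : ℕ) : ℝ))) := by
  have h4k : Tendsto (fun k : ℕ => 4 * k) atTop atTop :=
    tendsto_atTop_mono (fun k => by simp only [id_eq]; omega) tendsto_id
  have hlog4 : Tendsto (fun k : ℕ => Real.log ((4 * k : ℕ) : ℝ)) atTop atTop :=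
    Real.tendsto_log_atTop.comp (tendsto_natCast_atTop_atTop.comp h4k)
  have key : ∀ᶠ k : ℕ in atTop,
      |centralSum 1 (4 * k) - 1| ≤ 32 / Real.sqrt (Real.log ((4 * k : ℕ) : ℝ)) := by
    filter_upwards [hlog4.eventually_ge_atTop 1024, eventually_ge_atTop 1] with k hk hk1
    obtain ⟨K, rfl⟩ : ∃ K, k = K + 1 := ⟨k - 1, by omega⟩
    exact central_key K hk
  have hsqrt : Tendsto Real.sqrt atTop atTop :=
    (tendsto_rpow_atTop (by norm_num : (0:ℝ) < 1/2)).congr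
      (fun x => (Real.sqrt_eq_rpow x).symm)
  have hg0 : Tendsto (fun k : ℕ => 32 / Real.sqrt (Real.log ((4 * k : ℕ) : ℝ)))
      atTop (nhds 0) :=
    Tendsto.div_atTop tendsto_const_nhds (hsqrt.comp hlog4)
  have hdiff : Tendsto (fun k : ℕ => centralSum 1 (4 * k) - 1) atTop (nhds 0) :=
    squeeze_zero_norm' (by filter_upwards [key] with k hk; simpa using hk) hg0
  have htend : Tendsto (fun k : ℕ => centralSum 1 (4 * k)) atTop (nhds 1) := by
    have := hdiff.add_const 1
    simpa using this
  exact ⟨1, one_pos, htend, 32, by norm_num, key⟩
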